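/- arXiv:2508.13609 — 4 statements merged into one kernel-verified Lean document; each statement's English description precedes it below -/
import Mathlib

section
/- Define the discriminant d(T) of a finite list T = [a1, …, an] of integers as the determinant of the n×n tridiagonal matrix with diagonal entries a1, …, an and entries −1 on the sub- and super-diagonal (with d of the empty list equal to 1). Then the lists T with all entries ≥ 2 and d(T) ≤ 5 are exactly: [2]; [3], [2,2]; [4], [2,2,2]; [5], [2,2,2,2], [2,3], [3,2], with discriminants 2; 3, 3; 4, 4; 5, 5, 5, 5 respectively. -/
/-- The tridiagonal matrix with diagonal entries given by the list `T`
and entries `-1` on the sub- and super-diagonal. -/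
def tridiagMatrix (T : List ℤ) : Matrix (Fin T.length) (Fin T.length) ℤ :=
  Matrix.of fun i j =>
    if i = j then T.get i
    else if (i : ℕ) + 1 = (j : ℕ) ∨ (j : ℕ) + 1 = (i : ℕ) then -1 else 0

/-- The discriminant of a chain `T`: the determinant of the associated tridiagonal
matrix (so the discriminant of the empty list is `1`). -/
def chainDisc (T : List ℤ) : ℤ := (tridiagMatrix T).det

def discRec : List ℤ → ℤ
  | [] => 1
  | [a] => a
  | a :: b :: T => a * discRec (b :: T) - discRec T

lemma tridiag_shift (a : ℤ) (T : List ℤ) :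
    (tridiagMatrix (a :: T)).submatrix Fin.succ Fin.succ = tridiagMatrix T := by
  ext i j
  simp only [Matrix.submatrix_apply, tridiagMatrix, Matrix.of_apply]
  have h1 : (i.succ = j.succ) ↔ (i = j) := by
    constructor
    · exact fun h => Fin.succ_injective _ h
    · intro h; rw [h]
  rw [if_congr h1 rfl rfl]
  have h2 : (i.succ : ℕ) = (i : ℕ) + 1 := rfl
  have h3 : (j.succ : ℕ) = (j : ℕ) + 1 := rfl
  by_cases h : i = j
  · subst h; simp
  · rw [if_neg h, if_neg h]
    congr 1
    rw [h2, h3]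
    exact propext (by omega)

lemma chainDisc_nil : chainDisc [] = 1 := by
  simp [chainDisc, Matrix.det_isEmpty]

lemma chainDisc_single (a : ℤ) : chainDisc [a] = a := by
  simp [chainDisc, Matrix.det_fin_one, tridiagMatrix]

lemma tridiag_entry_zero (T : List ℤ) (i j : Fin T.length)
    (h1 : (i:ℕ) ≠ j) (h2 : (i:ℕ)+1 ≠ j) (h3 : (j:ℕ)+1 ≠ i) :
    tridiagMatrix T i j = 0 := by
  simp only [tridiagMatrix, Matrix.of_apply]
  rw [if_neg, if_neg]
  · omega
  · exact fun h => h1 (congrArg Fin.val h)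

lemma chainDisc_cons (a b : ℤ) (T : List ℤ) :
    chainDisc (a :: b :: T) = a * chainDisc (b :: T) - chainDisc T := by
  set A : Matrix (Fin (T.length+2)) (Fin (T.length+2)) ℤ :=
    Matrix.of (fun i j : Fin (T.length+2) => tridiagMatrix (a :: b :: T) i j) with hA
  have h0 : chainDisc (a :: b :: T) = A.det := rfl
  rw [h0, Matrix.det_succ_row_zero, Fin.sum_univ_succ, Fin.sum_univ_succ]
  have hz : ∀ j : Fin T.length, A 0 j.succ.succ = 0 := by
    intro j
    show tridiagMatrix (a :: b :: T) _ _ = 0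
    apply tridiag_entry_zero <;> simp [Fin.val_succ]
  simp only [hz, mul_zero, zero_mul, Finset.sum_const_zero, add_zero]
  have h00 : A 0 0 = a := by
    show tridiagMatrix (a :: b :: T) _ _ = a
    simp [tridiagMatrix]
  have h01 : A 0 (Fin.succ 0) = -1 := by
    show tridiagMatrix (a :: b :: T) _ _ = -1
    simp only [tridiagMatrix, Matrix.of_apply]
    rw [if_neg, if_pos]
    · left; rfl
    · exact (Fin.succ_ne_zero (0 : Fin (T.length+1))).symm
  have hsub0 : (A.submatrix Fin.succ (Fin.succAbove 0)).det = chainDisc (b :: T) := by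
    have : A.submatrix Fin.succ (Fin.succAbove 0) = tridiagMatrix (b :: T) := by
      have := tridiag_shift a (b :: T)
      ext i j
      simp only [Matrix.submatrix_apply, Fin.succAbove_zero, hA, Matrix.of_apply]
      exact congrFun (congrFun this i) j
    rw [this]; rfl
  have hsub1 : (A.submatrix Fin.succ (Fin.succ (0 : Fin (T.length+1))).succAbove).det
      = - chainDisc T := by
    set B := A.submatrix (Fin.succ : Fin (T.length+1) → Fin (T.length+2))
      (Fin.succ (0 : Fin (T.length+1))).succAbove with hB
    rw [Matrix.det_succ_column_zero, Fin.sum_univ_succ]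
    have hzc : ∀ i : Fin T.length, B i.succ (0 : Fin (T.length+1)) = 0 := by
      intro i
      rw [hB]
      simp only [Matrix.submatrix_apply]
      rw [Fin.succAbove_of_castSucc_lt _ _ (by simp [Fin.lt_def])]
      show tridiagMatrix (a :: b :: T) _ _ = 0
      apply tridiag_entry_zero <;> simp [Fin.val_succ]
    simp only [hzc, mul_zero, zero_mul, Finset.sum_const_zero, add_zero]
    have hB00 : B (0 : Fin (T.length+1)) (0 : Fin (T.length+1)) = -1 := by
      rw [hB]
      simp only [Matrix.submatrix_apply]
      rw [Fin.succAbove_of_castSucc_lt _ _ (by simp [Fin.lt_def])]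
      show tridiagMatrix (a :: b :: T) _ _ = -1
      simp only [tridiagMatrix, Matrix.of_apply]
      rw [if_neg, if_pos]
      · right; rfl
      · exact Fin.succ_ne_zero (0 : Fin (T.length+1)) ∘ id
    have hBsub : (B.submatrix (Fin.succAbove (0 : Fin (T.length+1))) Fin.succ).det
        = chainDisc T := by
      have hBS : B.submatrix (Fin.succAbove (0 : Fin (T.length+1))) Fin.succ
          = tridiagMatrix T := by
        ext i j
        simp only [Matrix.submatrix_apply, Fin.succAbove_zero, hB, hA, Matrix.of_apply]
        rw [Fin.succAbove_of_le_castSucc _ _ (by simp [Fin.le_def])]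
        have e1 := congrFun (congrFun (tridiag_shift a (b :: T)) i.succ) j.succ
        have e2 := congrFun (congrFun (tridiag_shift b T) i) j
        simp only [Matrix.submatrix_apply] at e1 e2
        rw [show ((i.succ.succ : Fin (T.length+2)) : Fin ((a::b::T).length)) = i.succ.succ from rfl]
        exact e2 ▸ e1
      rw [hBS]; rfl
    rw [hB00, hBsub]
    norm_num
  rw [hsub0, hsub1, h00, h01]
  simp [Fin.val_succ]
  ring

lemma chainDisc_eq_discRec : ∀ T : List ℤ, chainDisc T = discRec T
  | [] => chainDisc_nil
  | [a] => by rw [chainDisc_single]; rfl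
  | a :: b :: T => by
    rw [chainDisc_cons, chainDisc_eq_discRec (b :: T), chainDisc_eq_discRec T]
    rfl

/-- positivity and step monotonicity -/
lemma discRec_key : ∀ T : List ℤ, (∀ x ∈ T, 2 ≤ x) →
    1 ≤ discRec T ∧ ∀ a : ℤ, 2 ≤ a → discRec T + (a - 1) ≤ discRec (a :: T)
  | [], _ => by
    refine ⟨le_refl _, fun a ha => ?_⟩
    show (1 : ℤ) + (a - 1) ≤ a
    omega
  | b :: T, h => by
    have hb : 2 ≤ b := h b List.mem_cons_self
    have hT : ∀ x ∈ T, 2 ≤ x := fun x hx => h x (List.mem_cons_of_mem b hx)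
    obtain ⟨h1, h2⟩ := discRec_key T hT
    have h3 : discRec T + (b - 1) ≤ discRec (b :: T) := h2 b hb
    have h4 : 1 ≤ discRec (b :: T) := by omega
    refine ⟨h4, fun a ha => ?_⟩
    show discRec (b :: T) + (a - 1) ≤ a * discRec (b :: T) - discRec T
    nlinarith [h1, h3, h4]

lemma discRec_ge : ∀ T : List ℤ, (∀ x ∈ T, 2 ≤ x) →
    (T.map (fun x => x - 2)).sum + T.length + 1 ≤ discRec T
  | [], _ => by simp [discRec]
  | a :: T, h => by
    have ha : 2 ≤ a := h a List.mem_cons_self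
    have hT : ∀ x ∈ T, 2 ≤ x := fun x hx => h x (List.mem_cons_of_mem a hx)
    have h1 := discRec_ge T hT
    have h2 := (discRec_key T hT).2 a ha
    simp only [List.map_cons, List.sum_cons, List.length_cons]
    push_cast
    omega

lemma discRec_comp :
    discRec [2] = 2 ∧ discRec [3] = 3 ∧ discRec [2,2] = 3 ∧ discRec [4] = 4 ∧
    discRec [2,2,2] = 4 ∧ discRec [5] = 5 ∧ discRec [2,2,2,2] = 5 ∧
    discRec [2,3] = 5 ∧ discRec [3,2] = 5 := by
  norm_num [discRec]

/-- **Admissible chains of discriminant at most 5.**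
The nonempty lists of integers `≥ 2` with discriminant `≤ 5` are exactly
`[2]; [3], [2,2]; [4], [2,2,2]; [5], [2,2,2,2], [2,3], [3,2]`, with discriminants
`2; 3, 3; 4, 4; 5, 5, 5, 5` respectively. -/
theorem admissible_chains_of_small_disc :
    (∀ T : List ℤ, T ≠ [] →
      (((∀ a ∈ T, 2 ≤ a) ∧ chainDisc T ≤ 5) ↔
        T ∈ ([[2], [3], [2, 2], [4], [2, 2, 2], [5], [2, 2, 2, 2], [2, 3], [3, 2]] :
          List (List ℤ)))) ∧
    chainDisc [2] = 2 ∧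
    chainDisc [3] = 3 ∧ chainDisc [2, 2] = 3 ∧
    chainDisc [4] = 4 ∧ chainDisc [2, 2, 2] = 4 ∧
    chainDisc [5] = 5 ∧ chainDisc [2, 2, 2, 2] = 5 ∧
    chainDisc [2, 3] = 5 ∧ chainDisc [3, 2] = 5 := by
  obtain ⟨e1, e2, e3, e4, e5, e6, e7, e8, e9⟩ := discRec_comp
  refine ⟨?_, by rw [chainDisc_eq_discRec]; exact e1,
    by rw [chainDisc_eq_discRec]; exact e2, by rw [chainDisc_eq_discRec]; exact e3,
    by rw [chainDisc_eq_discRec]; exact e4, by rw [chainDisc_eq_discRec]; exact e5,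
    by rw [chainDisc_eq_discRec]; exact e6, by rw [chainDisc_eq_discRec]; exact e7,
    by rw [chainDisc_eq_discRec]; exact e8, by rw [chainDisc_eq_discRec]; exact e9⟩
  intro T hT
  constructor
  · rintro ⟨hge, hle⟩
    rw [chainDisc_eq_discRec] at hle
    have hsum := discRec_ge T hge
    rcases T with _ | ⟨a, _ | ⟨b, _ | ⟨c, _ | ⟨d, T'⟩⟩⟩⟩
    · exact absurd rfl hT
    · -- [a]
      have ha := hge a (by simp)
      simp only [List.map_cons, List.map_nil, List.sum_cons, List.sum_nil,
        List.length_cons, List.length_nil] at hsum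
      have hle' : a ≤ 5 := by
        have : discRec [a] = a := rfl
        omega
      interval_cases a <;> simp
    · -- [a, b]
      have ha := hge a (by simp)
      have hb := hge b (by simp)
      simp only [List.map_cons, List.map_nil, List.sum_cons, List.sum_nil,
        List.length_cons, List.length_nil] at hsum
      push_cast at hsum
      have hbound : a ≤ 4 ∧ b ≤ 4 := by omega
      obtain ⟨hab, hbb⟩ := hbound
      interval_cases a <;> interval_cases b <;>
        first
          | (simp; done)
          | (exfalso; revert hle; norm_num [discRec])
    · -- [a, b, c]
      have ha := hge a (by simp)
      have hb := hge b (by simp)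
      have hc := hge c (by simp)
      simp only [List.map_cons, List.map_nil, List.sum_cons, List.sum_nil,
        List.length_cons, List.length_nil] at hsum
      push_cast at hsum
      have hbound : a ≤ 3 ∧ b ≤ 3 ∧ c ≤ 3 := by omega
      obtain ⟨hab, hbb, hcb⟩ := hbound
      interval_cases a <;> interval_cases b <;> interval_cases c <;>
        first
          | (simp; done)
          | (exfalso; revert hle; norm_num [discRec])
    · -- [a, b, c, d, ...]
      have hnn : 0 ≤ (T'.map (fun x => x - 2)).sum := by
        apply List.sum_nonneg
        intro x hx
        simp only [List.mem_map] at hx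
        obtain ⟨y, hy, rfl⟩ := hx
        have := hge y (by simp [hy])
        omega
      have ha := hge a (by simp)
      have hb := hge b (by simp)
      have hc := hge c (by simp)
      have hd := hge d (by simp)
      simp only [List.map_cons, List.sum_cons, List.length_cons] at hsum
      push_cast at hsum
      have hlen : T' = [] := by
        cases T' with
        | nil => rfl
        | cons e T'' =>
          exfalso
          simp only [List.map_cons, List.sum_cons, List.length_cons] at hsum hnn
          have he := hge e (by simp)
          push_cast at hsum
          omega
      subst hlen
      simp only [List.map_nil, List.sum_nil, List.length_nil] at hsum
      have : a = 2 ∧ b = 2 ∧ c = 2 ∧ d = 2 := by omega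
      obtain ⟨rfl, rfl, rfl, rfl⟩ := this
      simp
  · intro hmem
    simp only [List.mem_cons, List.not_mem_nil, or_false] at hmem
    rcases hmem with rfl | rfl | rfl | rfl | rfl | rfl | rfl | rfl | rfl <;>
      refine ⟨by norm_num, by rw [chainDisc_eq_discRec]; omega⟩
end

section
/- Let b be an integer and T1, T2, T3 nonempty lists of integers with tridiagonal discriminants d1, d2, d3; let di′ be the discriminant of Ti with its last entry removed. Consider the tree obtained from a central vertex of weight b by attaching the three chains T1, T2, T3, each via its last entry. Then the tridiagonal-type determinant of this tree (determinant of the matrix with the weights on the diagonal and −1 in entries corresponding to adjacent vertices) equals b·d1·d2·d3 − (d1′·d2·d3 + d1·d2′·d3 + d1·d2·d3′). -/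
/-- Index type for the fork: a central vertex together with the vertices of three
chains. -/
abbrev ForkIdx (T1 T2 T3 : List ℤ) :=
  Unit ⊕ Fin T1.length ⊕ Fin T2.length ⊕ Fin T3.length

/-- Entries of the intersection-type matrix of the fork obtained from a central vertex
of weight `b` by attaching the three chains `T1, T2, T3`, each via its last entry:
the weights on the diagonal and `−1` in entries corresponding to adjacent vertices. -/
def forkEntry (b : ℤ) (T1 T2 T3 : List ℤ) :
    ForkIdx T1 T2 T3 → ForkIdx T1 T2 T3 → ℤ
  | Sum.inl _, Sum.inl _ => b
  | Sum.inl _, Sum.inr (Sum.inl j) => if (j : ℕ) + 1 = T1.length then -1 else 0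
  | Sum.inl _, Sum.inr (Sum.inr (Sum.inl j)) => if (j : ℕ) + 1 = T2.length then -1 else 0
  | Sum.inl _, Sum.inr (Sum.inr (Sum.inr j)) => if (j : ℕ) + 1 = T3.length then -1 else 0
  | Sum.inr (Sum.inl j), Sum.inl _ => if (j : ℕ) + 1 = T1.length then -1 else 0
  | Sum.inr (Sum.inr (Sum.inl j)), Sum.inl _ => if (j : ℕ) + 1 = T2.length then -1 else 0
  | Sum.inr (Sum.inr (Sum.inr j)), Sum.inl _ => if (j : ℕ) + 1 = T3.length then -1 else 0
  | Sum.inr (Sum.inl j), Sum.inr (Sum.inl k) =>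
      if j = k then T1.get j
      else if (j : ℕ) + 1 = (k : ℕ) ∨ (k : ℕ) + 1 = (j : ℕ) then -1 else 0
  | Sum.inr (Sum.inr (Sum.inl j)), Sum.inr (Sum.inr (Sum.inl k)) =>
      if j = k then T2.get j
      else if (j : ℕ) + 1 = (k : ℕ) ∨ (k : ℕ) + 1 = (j : ℕ) then -1 else 0
  | Sum.inr (Sum.inr (Sum.inr j)), Sum.inr (Sum.inr (Sum.inr k)) =>
      if j = k then T3.get j
      else if (j : ℕ) + 1 = (k : ℕ) ∨ (k : ℕ) + 1 = (j : ℕ) then -1 else 0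
  | _, _ => 0


lemma updCol_basis_det {n : Type*} [DecidableEq n] [Fintype n] (M : Matrix n n ℤ) (i : n)
    (h : M i = Pi.single i 1) :
    (M.updateCol i (Pi.single i 1)).det = M.det := by
  have hM : M = M.updateCol i (fun j => M j i) := (Matrix.updateCol_eq_self M i).symm
  have hsplit : (fun j => M j i) = Pi.single i 1 + (fun j => if j = i then 0 else M j i) := by
    funext j
    by_cases hj : j = i
    · subst hj; simp [h]
    · simp [hj, Pi.single_eq_of_ne hj]
  have hz : (M.updateCol i (fun j => if j = i then 0 else M j i)).det = 0 := by
    apply Matrix.det_eq_zero_of_row_eq_zero i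
    intro j
    by_cases hj : j = i
    · subst hj; simp [Matrix.updateCol_self]
    · rw [Matrix.updateCol_apply, if_neg hj, h, Pi.single_eq_of_ne hj]
  conv_rhs => rw [hM, hsplit]
  rw [Matrix.det_updateCol_add, hz, add_zero]

lemma lemG {α : Type*} [Fintype α] [DecidableEq α] (A : Matrix α α ℤ) (l : α) :
    (Matrix.of (fun i j => match i, j with
      | Sum.inl _, Sum.inl _ => (0 : ℤ)
      | Sum.inl _, Sum.inr y => if y = l then 1 else 0
      | Sum.inr x, Sum.inl _ => if x = l then 1 else 0
      | Sum.inr x, Sum.inr y => A x y) : Matrix (Unit ⊕ α) (Unit ⊕ α) ℤ).det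
      = -(A.updateRow l (Pi.single l 1)).det := by
  set G : Matrix (Unit ⊕ α) (Unit ⊕ α) ℤ := Matrix.of (fun i j => match i, j with
      | Sum.inl _, Sum.inl _ => (0 : ℤ)
      | Sum.inl _, Sum.inr y => if y = l then 1 else 0
      | Sum.inr x, Sum.inl _ => if x = l then 1 else 0
      | Sum.inr x, Sum.inr y => A x y) with hG
  have hne : (Sum.inl () : Unit ⊕ α) ≠ Sum.inr l := by simp
  have hperm := Matrix.det_permute (Equiv.swap (Sum.inl () : Unit ⊕ α) (Sum.inr l)) G
  rw [Equiv.Perm.sign_swap hne] at hperm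
  set G' : Matrix (Unit ⊕ α) (Unit ⊕ α) ℤ :=
    G.submatrix (Equiv.swap (Sum.inl () : Unit ⊕ α) (Sum.inr l)) id with hG'
  -- row (inr l) of G' is the basis vector
  have hrow : G' (Sum.inr l) = Pi.single (Sum.inr l) 1 := by
    funext z
    rcases z with _ | y
    · simp [hG', hG, Matrix.submatrix_apply, Equiv.swap_apply_right, Pi.single_eq_of_ne hne.symm]
    · simp only [hG', Matrix.submatrix_apply, Equiv.swap_apply_right, id_eq, hG, Matrix.of_apply]
      by_cases hy : y = l
      · subst hy; simp [Pi.single_eq_same]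
      · simp [hy, Pi.single_eq_of_ne (show (Sum.inr y : Unit ⊕ α) ≠ Sum.inr l by simpa using hy)]
  have hcol := updCol_basis_det G' (Sum.inr l) hrow
  set G'' := G'.updateCol (Sum.inr l) (Pi.single (Sum.inr l) 1) with hG''
  -- reindex
  have hre := Matrix.det_submatrix_equiv_self (Equiv.sumComm α Unit) G''
  rw [← Matrix.fromBlocks_toBlocks (G''.submatrix (Equiv.sumComm α Unit) (Equiv.sumComm α Unit))]
    at hre
  have h12 : (G''.submatrix (Equiv.sumComm α Unit) (Equiv.sumComm α Unit)).toBlocks₁₂ = 0 := by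
    ext x u
    simp only [Matrix.toBlocks₁₂, Matrix.submatrix_apply, Equiv.sumComm_apply, Sum.swap_inl,
      Sum.swap_inr, Matrix.of_apply]
    -- G'' (inr x) (inl ()) ; column inl () not updated
    rw [hG'', Matrix.updateCol_apply, if_neg (by simp)]
    rcases u
    by_cases hx : x = l
    · subst hx; simp [hG', hG, Equiv.swap_apply_right]
    · rw [hG', Matrix.submatrix_apply,
        Equiv.swap_apply_of_ne_of_ne (by simp) (by simp [hx])]
      simp [hG, hx]
  have h22 : (G''.submatrix (Equiv.sumComm α Unit) (Equiv.sumComm α Unit)).toBlocks₂₂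
      = Matrix.of (fun _ _ => (1 : ℤ)) := by
    ext u v
    simp only [Matrix.toBlocks₂₂, Matrix.submatrix_apply, Equiv.sumComm_apply, Sum.swap_inr,
      Matrix.of_apply]
    rw [hG'', Matrix.updateCol_apply, if_neg (by simp)]
    simp [hG', hG, Equiv.swap_apply_left]
  have h11 : (G''.submatrix (Equiv.sumComm α Unit) (Equiv.sumComm α Unit)).toBlocks₁₁
      = (A.updateRow l (Pi.single l 1)).updateCol l (Pi.single l 1) := by
    ext x y
    simp only [Matrix.toBlocks₁₁, Matrix.submatrix_apply, Equiv.sumComm_apply, Sum.swap_inl,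
      Matrix.of_apply]
    by_cases hy : y = l
    · rw [hG'', Matrix.updateCol_apply, if_pos (by rw [hy]), hy, Matrix.updateCol_self]
      by_cases hx : x = l
      · rw [hx, Pi.single_eq_same, Pi.single_eq_same]
      · rw [Pi.single_eq_of_ne (fun h => hx (Sum.inr_injective h)), Pi.single_eq_of_ne hx]
    · rw [hG'', Matrix.updateCol_apply, if_neg (fun h => hy (Sum.inr_injective h)),
        Matrix.updateCol_ne hy]
      by_cases hx : x = l
      · rw [hx, hG', Matrix.submatrix_apply, Equiv.swap_apply_right, Matrix.updateRow_self,
          Pi.single_eq_of_ne hy]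
        simp [hG, hy]
      · rw [hG', Matrix.submatrix_apply,
          Equiv.swap_apply_of_ne_of_ne (by simp) (by simp [hx])]
        simp [hG, Matrix.updateRow_ne hx]
  rw [h11, h12, h22] at hre
  rw [Matrix.det_fromBlocks_zero₁₂] at hre
  have hU : (Matrix.of (fun _ _ => (1:ℤ)) : Matrix Unit Unit ℤ).det = 1 := by
    rw [Matrix.det_unique]; rfl
  rw [hU, mul_one] at hre
  have hA' : ((A.updateRow l (Pi.single l 1)).updateCol l (Pi.single l 1)).det
      = (A.updateRow l (Pi.single l 1)).det :=
    updCol_basis_det _ l (Matrix.updateRow_self)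
  have : G'.det = -G.det := by
    rw [hperm]; push_cast; ring
  rw [hA'] at hre
  -- hre : (A.updateRow l ...).det = G''.det, hcol : G''.det = G'.det, this : G'.det = -G.det
  have := hre.trans (hcol.trans this)
  linarith

lemma lemH (T : List ℤ) (hT : T ≠ []) (l : Fin T.length) (hl : (l : ℕ) + 1 = T.length) :
    ((tridiagMatrix T).updateRow l (Pi.single l 1)).det = chainDisc T.dropLast := by
  set m := T.dropLast.length with hm
  have hlen : T.length = m + 1 := by
    rw [hm, List.length_dropLast]
    have : T.length ≠ 0 := fun h => hT (List.length_eq_zero_iff.mp h)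
    omega
  set K := (tridiagMatrix T).updateRow l (Pi.single l 1) with hK
  have hrow : K l = Pi.single l 1 := Matrix.updateRow_self
  rw [← updCol_basis_det K l hrow]
  set K' := K.updateCol l (Pi.single l 1) with hK'
  let e : Fin m ⊕ Fin 1 ≃ Fin T.length := finSumFinEquiv.trans (finCongr hlen.symm)
  rw [← Matrix.det_submatrix_equiv_self e K']
  rw [← Matrix.fromBlocks_toBlocks (K'.submatrix e e)]
  have hval : ∀ x : Fin m, ((e (Sum.inl x)) : ℕ) = (x : ℕ) := by
    intro x; simp [e, finSumFinEquiv]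
  have hnel : ∀ x : Fin m, e (Sum.inl x) ≠ l := by
    intro x h
    have := hval x
    rw [h] at this
    have hx := x.isLt
    omega
  have h12 : (K'.submatrix e e).toBlocks₁₂ = 0 := by
    ext x u
    simp only [Matrix.toBlocks₁₂, Matrix.submatrix_apply, Matrix.of_apply]
    have heu : e (Sum.inr u) = l := by
      have : ((e (Sum.inr u)) : ℕ) = m + (u : ℕ) := by simp [e, finSumFinEquiv]
      have hu : (u : ℕ) = 0 := by omega
      apply Fin.ext; omega
    rw [heu, hK', Matrix.updateCol_self, Pi.single_eq_of_ne (hnel x), Matrix.zero_apply]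
  have h22 : (K'.submatrix e e).toBlocks₂₂ = Matrix.of (fun _ _ => (1:ℤ)) := by
    ext u v
    simp only [Matrix.toBlocks₂₂, Matrix.submatrix_apply, Matrix.of_apply]
    have heu : ∀ w : Fin 1, e (Sum.inr w) = l := by
      intro w
      have : ((e (Sum.inr w)) : ℕ) = m + (w : ℕ) := by simp [e, finSumFinEquiv]
      have hu : (w : ℕ) = 0 := by omega
      apply Fin.ext; omega
    rw [heu, heu, hK', Matrix.updateCol_self, Pi.single_eq_same]
  have h11 : (K'.submatrix e e).toBlocks₁₁ = tridiagMatrix T.dropLast := by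
    ext x y
    simp only [Matrix.toBlocks₁₁, Matrix.submatrix_apply, Matrix.of_apply]
    rw [hK', Matrix.updateCol_ne (hnel y), hK, Matrix.updateRow_ne (hnel x)]
    simp only [tridiagMatrix, Matrix.of_apply]
    have hx := hval x; have hy := hval y
    by_cases hxy : x = y
    · rw [hxy, if_pos rfl, if_pos rfl]
      simp only [List.get_eq_getElem]
      rw [List.getElem_dropLast]
      simp only [hy]
    · have hLn : e (Sum.inl x) ≠ e (Sum.inl y) := fun h => hxy (Sum.inl_injective (e.injective h))
      rw [if_neg hLn, if_neg hxy]
      by_cases hadj : (x : ℕ) + 1 = (y : ℕ) ∨ (y : ℕ) + 1 = (x : ℕ)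
      · rw [if_pos (by rw [hx, hy]; exact hadj), if_pos hadj]
      · rw [if_neg (by rw [hx, hy]; exact hadj), if_neg hadj]
  rw [h11, h12, h22, Matrix.det_fromBlocks_zero₁₂]
  have hU : (Matrix.of (fun _ _ => (1:ℤ)) : Matrix (Fin 1) (Fin 1) ℤ).det = 1 := by
    rw [Matrix.det_fin_one]; rfl
  rw [hU, mul_one, chainDisc]

lemma detZero {α β : Type*} [Fintype α] [DecidableEq α] [Fintype β] [DecidableEq β]
    (N : Matrix (Unit ⊕ α ⊕ β) (Unit ⊕ α ⊕ β) ℤ)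
    (h1 : ∀ y : β, N (Sum.inl ()) (Sum.inr (Sum.inr y)) = 0)
    (h2 : ∀ (x : α) (y : β), N (Sum.inr (Sum.inl x)) (Sum.inr (Sum.inr y)) = 0)
    (h3 : N (Sum.inl ()) (Sum.inl ()) = 0)
    (h4 : ∀ x : α, N (Sum.inr (Sum.inl x)) (Sum.inl ()) = 0) :
    N.det = 0 := by
  rw [← Matrix.det_submatrix_equiv_self (Equiv.sumAssoc Unit α β) N,
    ← Matrix.fromBlocks_toBlocks (N.submatrix (Equiv.sumAssoc Unit α β) (Equiv.sumAssoc Unit α β))]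
  have h12 : (N.submatrix (Equiv.sumAssoc Unit α β) (Equiv.sumAssoc Unit α β)).toBlocks₁₂ = 0 := by
    ext i y
    rcases i with _ | x
    · simpa only [Matrix.toBlocks₁₂, Matrix.submatrix_apply, Matrix.of_apply,
        Equiv.sumAssoc_apply_inl_inl, Equiv.sumAssoc_apply_inr, Matrix.zero_apply] using h1 y
    · simpa only [Matrix.toBlocks₁₂, Matrix.submatrix_apply, Matrix.of_apply,
        Equiv.sumAssoc_apply_inl_inr, Equiv.sumAssoc_apply_inr, Matrix.zero_apply] using h2 x y
  rw [h12, Matrix.det_fromBlocks_zero₁₂]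
  have h11 : (N.submatrix (Equiv.sumAssoc Unit α β) (Equiv.sumAssoc Unit α β)).toBlocks₁₁.det
      = 0 := by
    apply Matrix.det_eq_zero_of_column_eq_zero (Sum.inl ())
    intro i
    rcases i with _ | x
    · simpa only [Matrix.toBlocks₁₁, Matrix.submatrix_apply, Matrix.of_apply,
        Equiv.sumAssoc_apply_inl_inl] using h3
    · simpa only [Matrix.toBlocks₁₁, Matrix.submatrix_apply, Matrix.of_apply,
        Equiv.sumAssoc_apply_inl_inl, Equiv.sumAssoc_apply_inl_inr] using h4 x
  rw [h11, zero_mul]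

lemma detMain {α β : Type*} [Fintype α] [DecidableEq α] [Fintype β] [DecidableEq β]
    (N : Matrix (Unit ⊕ α ⊕ β) (Unit ⊕ α ⊕ β) ℤ) (A : Matrix α α ℤ) (B : Matrix β β ℤ) (l : α)
    (hrow0 : N (Sum.inl ()) (Sum.inl ()) = 0)
    (hrowA : ∀ y : α, N (Sum.inl ()) (Sum.inr (Sum.inl y)) = if y = l then 1 else 0)
    (hrowB : ∀ y : β, N (Sum.inl ()) (Sum.inr (Sum.inr y)) = 0)
    (hcolA : ∀ x : α, N (Sum.inr (Sum.inl x)) (Sum.inl ()) = if x = l then 1 else 0)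
    (hcolB : ∀ x : β, N (Sum.inr (Sum.inr x)) (Sum.inl ()) = 0)
    (hA : ∀ x y, N (Sum.inr (Sum.inl x)) (Sum.inr (Sum.inl y)) = A x y)
    (hB : ∀ x y, N (Sum.inr (Sum.inr x)) (Sum.inr (Sum.inr y)) = B x y)
    (hAB : ∀ x y, N (Sum.inr (Sum.inl x)) (Sum.inr (Sum.inr y)) = 0)
    (hBA : ∀ x y, N (Sum.inr (Sum.inr x)) (Sum.inr (Sum.inl y)) = 0) :
    N.det = -(A.updateRow l (Pi.single l 1)).det * B.det := by
  rw [← Matrix.det_submatrix_equiv_self (Equiv.sumAssoc Unit α β) N,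
    ← Matrix.fromBlocks_toBlocks (N.submatrix (Equiv.sumAssoc Unit α β) (Equiv.sumAssoc Unit α β))]
  have h12 : (N.submatrix (Equiv.sumAssoc Unit α β) (Equiv.sumAssoc Unit α β)).toBlocks₁₂ = 0 := by
    ext i y
    rcases i with _ | x
    · simpa only [Matrix.toBlocks₁₂, Matrix.submatrix_apply, Matrix.of_apply,
        Equiv.sumAssoc_apply_inl_inl, Equiv.sumAssoc_apply_inr, Matrix.zero_apply] using hrowB y
    · simpa only [Matrix.toBlocks₁₂, Matrix.submatrix_apply, Matrix.of_apply,
        Equiv.sumAssoc_apply_inl_inr, Equiv.sumAssoc_apply_inr, Matrix.zero_apply] using hAB x y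
  have h21 : (N.submatrix (Equiv.sumAssoc Unit α β) (Equiv.sumAssoc Unit α β)).toBlocks₂₁ = 0 := by
    ext x i
    rcases i with _ | y
    · simpa only [Matrix.toBlocks₂₁, Matrix.submatrix_apply, Matrix.of_apply,
        Equiv.sumAssoc_apply_inl_inl, Equiv.sumAssoc_apply_inr, Matrix.zero_apply] using hcolB x
    · simpa only [Matrix.toBlocks₂₁, Matrix.submatrix_apply, Matrix.of_apply,
        Equiv.sumAssoc_apply_inl_inr, Equiv.sumAssoc_apply_inr, Matrix.zero_apply] using hBA x y
  have h22 : (N.submatrix (Equiv.sumAssoc Unit α β) (Equiv.sumAssoc Unit α β)).toBlocks₂₂ = B := by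
    ext x y
    simpa only [Matrix.toBlocks₂₂, Matrix.submatrix_apply, Matrix.of_apply,
      Equiv.sumAssoc_apply_inr] using hB x y
  have h11 : (N.submatrix (Equiv.sumAssoc Unit α β) (Equiv.sumAssoc Unit α β)).toBlocks₁₁
      = Matrix.of (fun i j => match i, j with
        | Sum.inl _, Sum.inl _ => (0 : ℤ)
        | Sum.inl _, Sum.inr y => if y = l then 1 else 0
        | Sum.inr x, Sum.inl _ => if x = l then 1 else 0
        | Sum.inr x, Sum.inr y => A x y) := by
    ext i j
    rcases i with _ | x <;> rcases j with _ | y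
    · simpa only [Matrix.toBlocks₁₁, Matrix.submatrix_apply, Matrix.of_apply,
        Equiv.sumAssoc_apply_inl_inl] using hrow0
    · simpa only [Matrix.toBlocks₁₁, Matrix.submatrix_apply, Matrix.of_apply,
        Equiv.sumAssoc_apply_inl_inl, Equiv.sumAssoc_apply_inl_inr] using hrowA y
    · simpa only [Matrix.toBlocks₁₁, Matrix.submatrix_apply, Matrix.of_apply,
        Equiv.sumAssoc_apply_inl_inl, Equiv.sumAssoc_apply_inl_inr] using hcolA x
    · simpa only [Matrix.toBlocks₁₁, Matrix.submatrix_apply, Matrix.of_apply,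
        Equiv.sumAssoc_apply_inl_inr] using hA x y
  rw [h11, h12, h21, h22, Matrix.det_fromBlocks_zero₁₂, lemG]

lemma lemF {α β : Type*} [Fintype α] [DecidableEq α] [Fintype β] [DecidableEq β]
    (M : Matrix (Unit ⊕ α ⊕ β) (Unit ⊕ α ⊕ β) ℤ) (A : Matrix α α ℤ) (B : Matrix β β ℤ) (l : α)
    (hrow : M (Sum.inl ()) = Pi.single (Sum.inr (Sum.inl l)) 1)
    (hA : ∀ x y, M (Sum.inr (Sum.inl x)) (Sum.inr (Sum.inl y)) = A x y)
    (hB : ∀ x y, M (Sum.inr (Sum.inr x)) (Sum.inr (Sum.inr y)) = B x y)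
    (hAB : ∀ x y, M (Sum.inr (Sum.inl x)) (Sum.inr (Sum.inr y)) = 0)
    (hBA : ∀ x y, M (Sum.inr (Sum.inr x)) (Sum.inr (Sum.inl y)) = 0)
    (hcolA : ∀ x, M (Sum.inr (Sum.inl x)) (Sum.inl ()) = if x = l then -1 else 0) :
    M.det = (A.updateRow l (Pi.single l 1)).det * B.det := by
  classical
  have hsplit : (fun r => M r (Sum.inl ()))
      = (-1 : ℤ) • Pi.single (Sum.inr (Sum.inl l) : Unit ⊕ α ⊕ β) 1
        + (fun r => Sum.casesOn r (fun _ => (0:ℤ))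
            (fun s => Sum.casesOn s (fun _ => (0:ℤ))
              (fun x => M (Sum.inr (Sum.inr x)) (Sum.inl ())))) := by
    funext r
    rcases r with _ | x | x
    · have h0 : M (Sum.inl ()) (Sum.inl ()) = 0 := by
        rw [hrow]; exact Pi.single_eq_of_ne (by simp) 1
      simp [h0, Pi.single_eq_of_ne
        (show (Sum.inl () : Unit ⊕ α ⊕ β) ≠ Sum.inr (Sum.inl l) by simp)]
    · simp only [Pi.add_apply, Pi.smul_apply, smul_eq_mul, hcolA x]
      by_cases hx : x = l
      · rw [hx]; simp [Pi.single_eq_same]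
      · rw [if_neg hx,
          Pi.single_eq_of_ne (fun h => hx (Sum.inl_injective (Sum.inr_injective h)))]
        simp
    · simp [Pi.single_eq_of_ne (show (Sum.inr (Sum.inr x) : Unit ⊕ α ⊕ β)
        ≠ Sum.inr (Sum.inl l) by simp)]
  have hMeq : M.det = (M.updateCol (Sum.inl ())
      ((-1 : ℤ) • Pi.single (Sum.inr (Sum.inl l)) 1
        + (fun r => Sum.casesOn r (fun _ => (0:ℤ))
            (fun s => Sum.casesOn s (fun _ => (0:ℤ))
              (fun x => M (Sum.inr (Sum.inr x)) (Sum.inl ())))))).det := by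
    rw [← hsplit, Matrix.updateCol_eq_self]
  rw [hMeq, Matrix.det_updateCol_add, Matrix.det_updateCol_smul]
  have hzero : (M.updateCol (Sum.inl ())
      (fun r => Sum.casesOn r (fun _ => (0:ℤ))
            (fun s => Sum.casesOn s (fun _ => (0:ℤ))
              (fun x => M (Sum.inr (Sum.inr x)) (Sum.inl ()))))).det = 0 := by
    apply detZero
    · intro y
      rw [Matrix.updateCol_ne (show (Sum.inr (Sum.inr y) : Unit ⊕ α ⊕ β) ≠ Sum.inl () by simp),
        hrow]
      exact Pi.single_eq_of_ne (by simp) 1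
    · intro x y
      rw [Matrix.updateCol_ne (show (Sum.inr (Sum.inr y) : Unit ⊕ α ⊕ β) ≠ Sum.inl () by simp)]
      exact hAB x y
    · rw [Matrix.updateCol_self]
    · intro x
      rw [Matrix.updateCol_self]
  have hmain : (M.updateCol (Sum.inl ()) (Pi.single (Sum.inr (Sum.inl l)) 1)).det
      = -((A.updateRow l (Pi.single l 1)).det) * B.det := by
    apply detMain
    · rw [Matrix.updateCol_self]
      exact Pi.single_eq_of_ne (by simp) 1
    · intro y
      rw [Matrix.updateCol_ne (show (Sum.inr (Sum.inl y) : Unit ⊕ α ⊕ β) ≠ Sum.inl () by simp),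
        hrow, Pi.single_apply]
      simp
    · intro y
      rw [Matrix.updateCol_ne (show (Sum.inr (Sum.inr y) : Unit ⊕ α ⊕ β) ≠ Sum.inl () by simp),
        hrow]
      exact Pi.single_eq_of_ne (by simp) 1
    · intro x
      rw [Matrix.updateCol_self, Pi.single_apply]
      simp
    · intro x
      rw [Matrix.updateCol_self]
      exact Pi.single_eq_of_ne (by simp) 1
    · intro x y
      rw [Matrix.updateCol_ne (show (Sum.inr (Sum.inl y) : Unit ⊕ α ⊕ β) ≠ Sum.inl () by simp)]
      exact hA x y
    · intro x y
      rw [Matrix.updateCol_ne (show (Sum.inr (Sum.inr y) : Unit ⊕ α ⊕ β) ≠ Sum.inl () by simp)]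
      exact hB x y
    · intro x y
      rw [Matrix.updateCol_ne (show (Sum.inr (Sum.inr y) : Unit ⊕ α ⊕ β) ≠ Sum.inl () by simp)]
      exact hAB x y
    · intro x y
      rw [Matrix.updateCol_ne (show (Sum.inr (Sum.inl y) : Unit ⊕ α ⊕ β) ≠ Sum.inl () by simp)]
      exact hBA x y
  rw [hzero, hmain]
  ring

def eqv2 (α β γ : Type*) : (Unit ⊕ β ⊕ (α ⊕ γ)) ≃ (Unit ⊕ α ⊕ β ⊕ γ) where
  toFun x := match x with
    | Sum.inl u => Sum.inl u
    | Sum.inr (Sum.inl b) => Sum.inr (Sum.inr (Sum.inl b))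
    | Sum.inr (Sum.inr (Sum.inl a)) => Sum.inr (Sum.inl a)
    | Sum.inr (Sum.inr (Sum.inr c)) => Sum.inr (Sum.inr (Sum.inr c))
  invFun x := match x with
    | Sum.inl u => Sum.inl u
    | Sum.inr (Sum.inl a) => Sum.inr (Sum.inr (Sum.inl a))
    | Sum.inr (Sum.inr (Sum.inl b)) => Sum.inr (Sum.inl b)
    | Sum.inr (Sum.inr (Sum.inr c)) => Sum.inr (Sum.inr (Sum.inr c))
  left_inv := by rintro (u | b | a | c) <;> rfl
  right_inv := by rintro (u | a | b | c) <;> rfl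

def eqv3 (α β γ : Type*) : (Unit ⊕ γ ⊕ (α ⊕ β)) ≃ (Unit ⊕ α ⊕ β ⊕ γ) where
  toFun x := match x with
    | Sum.inl u => Sum.inl u
    | Sum.inr (Sum.inl c) => Sum.inr (Sum.inr (Sum.inr c))
    | Sum.inr (Sum.inr (Sum.inl a)) => Sum.inr (Sum.inl a)
    | Sum.inr (Sum.inr (Sum.inr b)) => Sum.inr (Sum.inr (Sum.inl b))
  invFun x := match x with
    | Sum.inl u => Sum.inl u
    | Sum.inr (Sum.inl a) => Sum.inr (Sum.inr (Sum.inl a))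
    | Sum.inr (Sum.inr (Sum.inl b)) => Sum.inr (Sum.inr (Sum.inr b))
    | Sum.inr (Sum.inr (Sum.inr c)) => Sum.inr (Sum.inl c)
  left_inv := by rintro (u | c | a | b) <;> rfl
  right_inv := by rintro (u | a | b | c) <;> rfl


set_option maxHeartbeats 2000000 in
/-- **Discriminant of a fork.**
For an integer `b` and nonempty lists `T1, T2, T3` of integers with discriminants
`d1, d2, d3` (and `di′` the discriminant of `Ti` minus its last entry), the determinant
of the tridiagonal-type matrix of the fork equals
`b·d1·d2·d3 − (d1′·d2·d3 + d1·d2′·d3 + d1·d2·d3′)`. -/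
theorem fork_det (b : ℤ) (T1 T2 T3 : List ℤ)
    (h1 : T1 ≠ []) (h2 : T2 ≠ []) (h3 : T3 ≠ []) :
    (Matrix.of (forkEntry b T1 T2 T3)).det =
      b * chainDisc T1 * chainDisc T2 * chainDisc T3 -
        (chainDisc T1.dropLast * chainDisc T2 * chainDisc T3 +
          chainDisc T1 * chainDisc T2.dropLast * chainDisc T3 +
          chainDisc T1 * chainDisc T2 * chainDisc T3.dropLast) := by
  classical
  have hn1 : 0 < T1.length := List.length_pos_iff.mpr h1
  have hn2 : 0 < T2.length := List.length_pos_iff.mpr h2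
  have hn3 : 0 < T3.length := List.length_pos_iff.mpr h3
  set l1 : Fin T1.length := ⟨T1.length - 1, by omega⟩ with hl1
  set l2 : Fin T2.length := ⟨T2.length - 1, by omega⟩ with hl2
  set l3 : Fin T3.length := ⟨T3.length - 1, by omega⟩ with hl3
  set M : Matrix (ForkIdx T1 T2 T3) (ForkIdx T1 T2 T3) ℤ := Matrix.of (forkEntry b T1 T2 T3)
    with hM
  set L1 : ForkIdx T1 T2 T3 := Sum.inr (Sum.inl l1) with hL1
  set L2 : ForkIdx T1 T2 T3 := Sum.inr (Sum.inr (Sum.inl l2)) with hL2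
  set L3 : ForkIdx T1 T2 T3 := Sum.inr (Sum.inr (Sum.inr l3)) with hL3
  have hrowsplit : M (Sum.inl ()) = b • (Pi.single (Sum.inl () : ForkIdx T1 T2 T3) 1)
      + ((-1 : ℤ) • Pi.single L1 1 + ((-1 : ℤ) • Pi.single L2 1 + (-1 : ℤ) • Pi.single L3 1)) := by
    funext z
    rcases z with _ | x | x | x
    · simp [hM, forkEntry, Pi.single_apply, hL1, hL2, hL3]
    · have : M (Sum.inl ()) (Sum.inr (Sum.inl x)) = if (x:ℕ) + 1 = T1.length then -1 else 0 := rfl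
      rw [this]
      simp only [Pi.add_apply, Pi.smul_apply, Pi.single_apply, smul_eq_mul]
      by_cases hx : (x : ℕ) + 1 = T1.length
      · have hx' : x = l1 := by apply Fin.ext; simp [hl1]; omega
        rw [if_pos hx]
        simp [hx', hL1, hL2, hL3]
      · have hx' : ¬ ((Sum.inr (Sum.inl x) : ForkIdx T1 T2 T3) = L1) := by
          rw [hL1]
          intro h
          have := Sum.inl_injective (Sum.inr_injective h)
          rw [Fin.ext_iff] at this
          simp [hl1] at this
          omega
        rw [if_neg hx]
        simp [hx', hL2, hL3]
    · have : M (Sum.inl ()) (Sum.inr (Sum.inr (Sum.inl x)))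
          = if (x:ℕ) + 1 = T2.length then -1 else 0 := rfl
      rw [this]
      simp only [Pi.add_apply, Pi.smul_apply, Pi.single_apply, smul_eq_mul]
      by_cases hx : (x : ℕ) + 1 = T2.length
      · have hx' : x = l2 := by apply Fin.ext; simp [hl2]; omega
        rw [if_pos hx]
        simp [hx', hL1, hL2, hL3]
      · have hx' : ¬ ((Sum.inr (Sum.inr (Sum.inl x)) : ForkIdx T1 T2 T3) = L2) := by
          rw [hL2]
          intro h
          have := Sum.inl_injective (Sum.inr_injective (Sum.inr_injective h))
          rw [Fin.ext_iff] at this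
          simp [hl2] at this
          omega
        rw [if_neg hx]
        simp [hx', hL1, hL3]
    · have : M (Sum.inl ()) (Sum.inr (Sum.inr (Sum.inr x)))
          = if (x:ℕ) + 1 = T3.length then -1 else 0 := rfl
      rw [this]
      simp only [Pi.add_apply, Pi.smul_apply, Pi.single_apply, smul_eq_mul]
      by_cases hx : (x : ℕ) + 1 = T3.length
      · have hx' : x = l3 := by apply Fin.ext; simp [hl3]; omega
        rw [if_pos hx]
        simp [hx', hL1, hL2, hL3]
      · have hx' : ¬ ((Sum.inr (Sum.inr (Sum.inr x)) : ForkIdx T1 T2 T3) = L3) := by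
          rw [hL3]
          intro h
          have := Sum.inr_injective (Sum.inr_injective (Sum.inr_injective h))
          rw [Fin.ext_iff] at this
          simp [hl3] at this
          omega
        rw [if_neg hx]
        simp [hx', hL1, hL2]
  have hdet : M.det = b * (M.updateRow (Sum.inl ()) (Pi.single (Sum.inl ()) 1)).det
      + (-1) * (M.updateRow (Sum.inl ()) (Pi.single L1 1)).det
      + (-1) * (M.updateRow (Sum.inl ()) (Pi.single L2 1)).det
      + (-1) * (M.updateRow (Sum.inl ()) (Pi.single L3 1)).det := by
    conv_lhs => rw [← Matrix.updateRow_eq_self M (Sum.inl ()), hrowsplit]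
    rw [Matrix.det_updateRow_add, Matrix.det_updateRow_add, Matrix.det_updateRow_add,
      Matrix.det_updateRow_smul, Matrix.det_updateRow_smul, Matrix.det_updateRow_smul,
      Matrix.det_updateRow_smul]
    ring
  -- the central term
  have hN0 : (M.updateRow (Sum.inl ()) (Pi.single (Sum.inl ()) 1)).det
      = chainDisc T1 * (chainDisc T2 * chainDisc T3) := by
    rw [← updCol_basis_det _ (Sum.inl ()) (Matrix.updateRow_self)]
    have heq : ((M.updateRow (Sum.inl ()) (Pi.single (Sum.inl ()) 1)).updateCol (Sum.inl ())
        (Pi.single (Sum.inl ()) 1))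
        = Matrix.fromBlocks (1 : Matrix Unit Unit ℤ) 0 0
          (Matrix.fromBlocks (tridiagMatrix T1) 0 0
            (Matrix.fromBlocks (tridiagMatrix T2) 0 0 (tridiagMatrix T3))) := by
      ext i j
      rcases i with _ | x | x | x <;> rcases j with _ | y | y | y <;>
        simp [Matrix.updateCol_apply, Matrix.updateRow_apply, Pi.single_apply,
          hM, forkEntry, tridiagMatrix]
    rw [heq, Matrix.det_fromBlocks_zero₂₁, Matrix.det_fromBlocks_zero₂₁,
      Matrix.det_fromBlocks_zero₂₁, Matrix.det_one, one_mul]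
    rfl
  -- chain 1 term
  have hN1 : (M.updateRow (Sum.inl ()) (Pi.single L1 1)).det
      = chainDisc T1.dropLast * (chainDisc T2 * chainDisc T3) := by
    rw [lemF (M.updateRow (Sum.inl ()) (Pi.single L1 1)) (tridiagMatrix T1)
      (Matrix.fromBlocks (tridiagMatrix T2) 0 0 (tridiagMatrix T3)) l1
      (Matrix.updateRow_self)
      (fun x y => by rw [Matrix.updateRow_ne (by simp)]; rfl)
      (fun x y => by
        rw [Matrix.updateRow_ne (by simp)]
        rcases x with x | x <;> rcases y with y | y <;> rfl)
      (fun x y => by rw [Matrix.updateRow_ne (by simp)]; rcases y with y | y <;> rfl)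
      (fun x y => by rw [Matrix.updateRow_ne (by simp)]; rcases x with x | x <;> rfl)
      (fun x => by
        rw [Matrix.updateRow_ne (by simp)]
        have : M (Sum.inr (Sum.inl x)) (Sum.inl ())
            = if (x:ℕ) + 1 = T1.length then -1 else 0 := rfl
        rw [this]
        by_cases hx : (x:ℕ) + 1 = T1.length
        · rw [if_pos hx, if_pos (by apply Fin.ext; simp [hl1]; omega)]
        · rw [if_neg hx, if_neg (by intro h; rw [Fin.ext_iff] at h; simp [hl1] at h; omega)])]
    rw [lemH T1 h1 l1 (by simp [hl1]; omega), Matrix.det_fromBlocks_zero₂₁]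
    rfl
  -- chain 2 term
  have hN2 : (M.updateRow (Sum.inl ()) (Pi.single L2 1)).det
      = chainDisc T2.dropLast * (chainDisc T1 * chainDisc T3) := by
    rw [← Matrix.det_submatrix_equiv_self
      (eqv2 (Fin T1.length) (Fin T2.length) (Fin T3.length))]
    rw [lemF _ (tridiagMatrix T2)
      (Matrix.fromBlocks (tridiagMatrix T1) 0 0 (tridiagMatrix T3)) l2
      (by
        funext z
        rcases z with _ | x | x | x <;>
          simp only [Matrix.submatrix_apply, eqv2, Equiv.coe_fn_mk] <;>
          rw [Matrix.updateRow_self] <;>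
          simp [Pi.single_apply, hL2, Sum.inr.injEq, Sum.inl.injEq]
        )
      (fun x y => by
        simp only [Matrix.submatrix_apply, eqv2, Equiv.coe_fn_mk]
        rw [Matrix.updateRow_ne (by simp)]; rfl)
      (fun x y => by
        simp only [Matrix.submatrix_apply, eqv2, Equiv.coe_fn_mk]
        rcases x with x | x <;> rcases y with y | y <;>
          rw [Matrix.updateRow_ne (by simp)] <;> rfl)
      (fun x y => by
        simp only [Matrix.submatrix_apply, eqv2, Equiv.coe_fn_mk]
        rcases y with y | y <;> rw [Matrix.updateRow_ne (by simp)] <;> rfl)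
      (fun x y => by
        simp only [Matrix.submatrix_apply, eqv2, Equiv.coe_fn_mk]
        rcases x with x | x <;> rw [Matrix.updateRow_ne (by simp)] <;> rfl)
      (fun x => by
        simp only [Matrix.submatrix_apply, eqv2, Equiv.coe_fn_mk]
        rw [Matrix.updateRow_ne (by simp)]
        have : M (Sum.inr (Sum.inr (Sum.inl x))) (Sum.inl ())
            = if (x:ℕ) + 1 = T2.length then -1 else 0 := rfl
        rw [this]
        by_cases hx : (x:ℕ) + 1 = T2.length
        · rw [if_pos hx, if_pos (by apply Fin.ext; simp [hl2]; omega)]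
        · rw [if_neg hx, if_neg (by intro h; rw [Fin.ext_iff] at h; simp [hl2] at h; omega)])]
    rw [lemH T2 h2 l2 (by simp [hl2]; omega), Matrix.det_fromBlocks_zero₂₁]
    rfl
  -- chain 3 term
  have hN3 : (M.updateRow (Sum.inl ()) (Pi.single L3 1)).det
      = chainDisc T3.dropLast * (chainDisc T1 * chainDisc T2) := by
    rw [← Matrix.det_submatrix_equiv_self
      (eqv3 (Fin T1.length) (Fin T2.length) (Fin T3.length))]
    rw [lemF _ (tridiagMatrix T3)
      (Matrix.fromBlocks (tridiagMatrix T1) 0 0 (tridiagMatrix T2)) l3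
      (by
        funext z
        rcases z with _ | x | x | x <;>
          simp only [Matrix.submatrix_apply, eqv3, Equiv.coe_fn_mk] <;>
          rw [Matrix.updateRow_self] <;>
          simp [Pi.single_apply, hL3, Sum.inr.injEq, Sum.inl.injEq]
        )
      (fun x y => by
        simp only [Matrix.submatrix_apply, eqv3, Equiv.coe_fn_mk]
        rw [Matrix.updateRow_ne (by simp)]; rfl)
      (fun x y => by
        simp only [Matrix.submatrix_apply, eqv3, Equiv.coe_fn_mk]
        rcases x with x | x <;> rcases y with y | y <;>
          rw [Matrix.updateRow_ne (by simp)] <;> rfl)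
      (fun x y => by
        simp only [Matrix.submatrix_apply, eqv3, Equiv.coe_fn_mk]
        rcases y with y | y <;> rw [Matrix.updateRow_ne (by simp)] <;> rfl)
      (fun x y => by
        simp only [Matrix.submatrix_apply, eqv3, Equiv.coe_fn_mk]
        rcases x with x | x <;> rw [Matrix.updateRow_ne (by simp)] <;> rfl)
      (fun x => by
        simp only [Matrix.submatrix_apply, eqv3, Equiv.coe_fn_mk]
        rw [Matrix.updateRow_ne (by simp)]
        have : M (Sum.inr (Sum.inr (Sum.inr x))) (Sum.inl ())
            = if (x:ℕ) + 1 = T3.length then -1 else 0 := rfl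
        rw [this]
        by_cases hx : (x:ℕ) + 1 = T3.length
        · rw [if_pos hx, if_pos (by apply Fin.ext; simp [hl3]; omega)]
        · rw [if_neg hx, if_neg (by intro h; rw [Fin.ext_iff] at h; simp [hl3] at h; omega)])]
    rw [lemH T3 h3 l3 (by simp [hl3]; omega), Matrix.det_fromBlocks_zero₂₁]
    rfl
  rw [hM] at hdet
  rw [hdet, hN0, hN1, hN2, hN3]
  ring
end

section
/- Let M1 be the 10×11 integer matrix with rows: (1,0,0,1,0,0,0,0,0,0,0), (1,0,0,0,0,1,0,0,0,0,0), (1,0,0,0,0,0,1,1,0,0,0), (0,1,1,0,0,0,0,0,0,0,0), (0,1,0,0,1,0,0,0,0,0,0), (0,1,0,0,0,0,1,0,0,0,1), (0,0,1,0,0,0,0,−2,0,0,0), (0,0,0,1,0,0,0,0,−2,1,0), (0,0,0,0,1,0,0,0,1,−3,0), (0,0,0,0,0,1,0,0,0,0,−2). Then the cokernel of the ℤ-linear map ℤ^11 → ℤ^10 defined by M1 is a finite group of order 3 (isomorphic to ℤ/3ℤ). -/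
set_option maxHeartbeats 1000000


/-- The matrix of the restriction map `H²(X₁) → H²(D₁)` for the minimal log
resolution of the first del Pezzo surface of singularity type `[2,2,3,(2)₅] + [3,2]`. -/
def M1 : Matrix (Fin 10) (Fin 11) ℤ :=
  !![1, 0, 0, 1, 0, 0, 0, 0, 0, 0, 0;
     1, 0, 0, 0, 0, 1, 0, 0, 0, 0, 0;
     1, 0, 0, 0, 0, 0, 1, 1, 0, 0, 0;
     0, 1, 1, 0, 0, 0, 0, 0, 0, 0, 0;
     0, 1, 0, 0, 1, 0, 0, 0, 0, 0, 0;
     0, 1, 0, 0, 0, 0, 1, 0, 0, 0, 1;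
     0, 0, 1, 0, 0, 0, 0, -2, 0, 0, 0;
     0, 0, 0, 1, 0, 0, 0, 0, -2, 1, 0;
     0, 0, 0, 0, 1, 0, 0, 0, 1, -3, 0;
     0, 0, 0, 0, 0, 1, 0, 0, 0, 0, -2]

/-- The functional `x ↦ Σ cᵢ xᵢ mod 3` cutting out the image of `M1`. -/
def cvec : Fin 10 → ℤ := ![3, -7, 4, -2, 6, -4, 2, -3, -6, 7]

/-- The linear functional to `ZMod 3`. -/
def phi1 : (Fin 10 → ℤ) →ₗ[ℤ] ZMod 3 where
  toFun x := ((∑ i, cvec i * x i : ℤ) : ZMod 3)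
  map_add' x y := by
    push_cast [Pi.add_apply, mul_add, Finset.sum_add_distrib]
    ring
  map_smul' r x := by
    simp only [smul_eq_mul, RingHom.id_apply, Pi.smul_apply]
    rw [zsmul_eq_mul]
    push_cast [Finset.mul_sum]
    congr 1
    ext i
    ring

lemma key1 (a b c d e f g h i j k : ℤ) :
    ∑ t, cvec t * (M1.mulVec ![a, b, c, d, e, f, g, h, i, j, k]) t
      = 3 * (5 * j - 6 * k) := by
  simp [M1, cvec, Matrix.mulVec, dotProduct, Fin.sum_univ_succ]
  ring

lemma key2 (x0 x1 x2 x3 x4 x5 x6 x7 x8 x9 k : ℤ)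
    (hk : 3*x0 - 7*x1 + 4*x2 - 2*x3 + 6*x4 - 4*x5 + 2*x6 - 3*x7 - 6*x8 + 7*x9 = 3 * k) :
    M1.mulVec
      ![3*x0 - 6*x1 + 4*x2 - 2*x3 + 6*x4 - 4*x5 + 2*x6 - 3*x7 - 6*x8 + 6*x9 - k,
        2*x0 - 4*x1 + 2*x2 - x3 + 4*x4 - 2*x5 + x6 - 2*x7 - 4*x8 + 4*x9,
        -2*x0 + 4*x1 - 2*x2 + 2*x3 - 4*x4 + 2*x5 - x6 + 2*x7 + 4*x8 - 4*x9,
        -2*x0 + 6*x1 - 4*x2 + 2*x3 - 6*x4 + 4*x5 - 2*x6 + 3*x7 + 6*x8 - 6*x9 + k,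
        -2*x0 + 4*x1 - 2*x2 + x3 - 3*x4 + 2*x5 - x6 + 2*x7 + 4*x8 - 4*x9,
        -3*x0 + 7*x1 - 4*x2 + 2*x3 - 6*x4 + 4*x5 - 2*x6 + 3*x7 + 6*x8 - 6*x9 + k,
        -2*x0 + 4*x1 - 2*x2 + x3 - 4*x4 + 3*x5 - x6 + 2*x7 + 4*x8 - 4*x9 + k,
        -x0 + 2*x1 - x2 + x3 - 2*x4 + x5 - x6 + x7 + 2*x8 - 2*x9,
        -x0 + 3*x1 - 2*x2 + x3 - 3*x4 + 2*x5 - x6 + x7 + 3*x8 - 3*x9,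
        -k, -k]
      = ![x0, x1, x2, x3, x4, x5, x6, x7, x8, x9] := by
  simp only [M1, Matrix.cons_mulVec, Matrix.cons_dotProduct, Matrix.dotProduct_of_isEmpty,
    Matrix.head_cons, Matrix.tail_cons, Matrix.empty_mulVec, Matrix.of_apply]
  simp only [Matrix.vecCons, Fin.cons_inj]
  norm_num
  and_intros <;> linarith

lemma range_eq_ker : LinearMap.range (Matrix.mulVecLin M1) = LinearMap.ker phi1 := by
  apply le_antisymm
  · rintro _ ⟨v, rfl⟩
    have hv : v = ![v 0, v 1, v 2, v 3, v 4, v 5, v 6, v 7, v 8, v 9, v 10] := by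
      funext i; fin_cases i <;> rfl
    simp only [LinearMap.mem_ker, phi1, LinearMap.coe_mk, AddHom.coe_mk,
      Matrix.mulVecLin_apply]
    rw [ZMod.intCast_zmod_eq_zero_iff_dvd, hv, key1]
    exact ⟨_, rfl⟩
  · intro x hx
    simp only [LinearMap.mem_ker, phi1, LinearMap.coe_mk, AddHom.coe_mk] at hx
    rw [ZMod.intCast_zmod_eq_zero_iff_dvd] at hx
    obtain ⟨k, hk⟩ := hx
    have hxe : x = ![x 0, x 1, x 2, x 3, x 4, x 5, x 6, x 7, x 8, x 9] := by
      funext i; fin_cases i <;> rfl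
    rw [hxe] at hk
    simp only [cvec, Fin.sum_univ_succ, Fin.sum_univ_zero, Matrix.cons_val_zero,
      Matrix.cons_val_succ] at hk
    have hk' : 3*(x 0) - 7*(x 1) + 4*(x 2) - 2*(x 3) + 6*(x 4) - 4*(x 5) + 2*(x 6)
        - 3*(x 7) - 6*(x 8) + 7*(x 9) = 3 * k := by push_cast at hk; linarith [hk]
    have h2 := key2 (x 0) (x 1) (x 2) (x 3) (x 4) (x 5) (x 6) (x 7) (x 8) (x 9) k hk'
    refine ⟨![3*x 0 - 6*x 1 + 4*x 2 - 2*x 3 + 6*x 4 - 4*x 5 + 2*x 6 - 3*x 7 - 6*x 8 + 6*x 9 - k,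
      2*x 0 - 4*x 1 + 2*x 2 - x 3 + 4*x 4 - 2*x 5 + x 6 - 2*x 7 - 4*x 8 + 4*x 9,
      -2*x 0 + 4*x 1 - 2*x 2 + 2*x 3 - 4*x 4 + 2*x 5 - x 6 + 2*x 7 + 4*x 8 - 4*x 9,
      -2*x 0 + 6*x 1 - 4*x 2 + 2*x 3 - 6*x 4 + 4*x 5 - 2*x 6 + 3*x 7 + 6*x 8 - 6*x 9 + k,
      -2*x 0 + 4*x 1 - 2*x 2 + x 3 - 3*x 4 + 2*x 5 - x 6 + 2*x 7 + 4*x 8 - 4*x 9,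
      -3*x 0 + 7*x 1 - 4*x 2 + 2*x 3 - 6*x 4 + 4*x 5 - 2*x 6 + 3*x 7 + 6*x 8 - 6*x 9 + k,
      -2*x 0 + 4*x 1 - 2*x 2 + x 3 - 4*x 4 + 3*x 5 - x 6 + 2*x 7 + 4*x 8 - 4*x 9 + k,
      -x 0 + 2*x 1 - x 2 + x 3 - 2*x 4 + x 5 - x 6 + x 7 + 2*x 8 - 2*x 9,
      -x 0 + 3*x 1 - 2*x 2 + x 3 - 3*x 4 + 2*x 5 - x 6 + x 7 + 3*x 8 - 3*x 9,
      -k, -k], ?_⟩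
    rw [Matrix.mulVecLin_apply, h2, ← hxe]

lemma phi1_surj : Function.Surjective phi1 := by
  have h1 : phi1 ![0, 0, 1, 0, 0, 0, 0, 0, 0, 0] = 1 := by
    simp only [phi1, LinearMap.coe_mk, AddHom.coe_mk, cvec, Fin.sum_univ_succ,
      Fin.sum_univ_zero, Matrix.cons_val_zero, Matrix.cons_val_succ]
    decide
  intro y
  obtain ⟨z, hz⟩ := ZMod.intCast_surjective (n := 3) y
  refine ⟨z • ![0, 0, 1, 0, 0, 0, 0, 0, 0, 0], ?_⟩
  rw [map_smul, h1, zsmul_eq_mul, mul_one, hz]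

/-- **The cokernel of `M1` has order `3`.**
The cokernel of the `ℤ`-linear map `ℤ¹¹ → ℤ¹⁰` defined by `M1` is a finite group of
order `3`, isomorphic to `ℤ/3ℤ`. -/
theorem coker_M1_order_three :
    Nat.card ((Fin 10 → ℤ) ⧸ LinearMap.range (Matrix.mulVecLin M1)) = 3 ∧
    Nonempty (((Fin 10 → ℤ) ⧸ LinearMap.range (Matrix.mulVecLin M1)) ≃+ ZMod 3) := by
  have e : ((Fin 10 → ℤ) ⧸ LinearMap.range (Matrix.mulVecLin M1)) ≃ₗ[ℤ] ZMod 3 :=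
    (Submodule.quotEquivOfEq _ _ range_eq_ker).trans
      (phi1.quotKerEquivOfSurjective phi1_surj)
  refine ⟨?_, ⟨e.toAddEquiv⟩⟩
  rw [Nat.card_congr e.toEquiv, Nat.card_zmod]
end

section
/- Let M2 be the 10×11 integer matrix with rows: (1,0,0,1,0,0,0,0,0,0,0), (1,0,0,0,0,1,0,0,0,0,0), (1,0,0,0,1,0,1,1,0,0,0), (0,1,1,0,0,0,0,0,0,0,0), (0,1,0,0,1,0,0,0,0,0,0), (0,1,0,0,0,0,1,0,0,0,1), (0,0,1,0,0,0,0,−2,0,0,0), (0,0,0,1,0,0,0,0,−2,0,0), (0,0,0,0,0,1,0,0,0,−2,1), (0,0,0,0,0,0,0,0,0,1,−2). Then the ℤ-linear map ℤ^11 → ℤ^10 defined by M2 is surjective; equivalently, its cokernel is trivial. -/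
/-- The matrix of the restriction map `H²(X₂) → H²(D₂)` for the minimal log
resolution of the second del Pezzo surface of singularity type `[2,2,3,(2)₅] + [3,2]`. -/
def M2 : Matrix (Fin 10) (Fin 11) ℤ :=
  !![1, 0, 0, 1, 0, 0, 0, 0, 0, 0, 0;
     1, 0, 0, 0, 0, 1, 0, 0, 0, 0, 0;
     1, 0, 0, 0, 1, 0, 1, 1, 0, 0, 0;
     0, 1, 1, 0, 0, 0, 0, 0, 0, 0, 0;
     0, 1, 0, 0, 1, 0, 0, 0, 0, 0, 0;
     0, 1, 0, 0, 0, 0, 1, 0, 0, 0, 1;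
     0, 0, 1, 0, 0, 0, 0, -2, 0, 0, 0;
     0, 0, 0, 1, 0, 0, 0, 0, -2, 0, 0;
     0, 0, 0, 0, 0, 1, 0, 0, 0, -2, 1;
     0, 0, 0, 0, 0, 0, 0, 0, 0, 1, -2]

/-- A right inverse of `M2`. -/
def N2 : Matrix (Fin 11) (Fin 10) ℤ :=
  !![-15, 4, 12, 24, -12, -12, -24, 15, -4, -8;
     -8, 2, 6, 13, -6, -6, -13, 8, -2, -4;
     8, -2, -6, -12, 6, 6, 13, -8, 2, 4;
     16, -4, -12, -24, 12, 12, 24, -15, 4, 8;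
     8, -2, -6, -13, 7, 6, 13, -8, 2, 4;
     15, -3, -12, -24, 12, 12, 24, -15, 4, 8;
     3, -1, -2, -5, 2, 3, 5, -3, 1, 2;
     4, -1, -3, -6, 3, 3, 6, -4, 1, 2;
     8, -2, -6, -12, 6, 6, 12, -8, 2, 4;
     10, -2, -8, -16, 8, 8, 16, -10, 2, 5;
     5, -1, -4, -8, 4, 4, 8, -5, 1, 2]

lemma M2_mul_N2 : M2 * N2 = 1 := by
  decide

/-- **The map defined by `M2` is surjective; equivalently, its cokernel is trivial.** -/
theorem M2_surjective :
    Function.Surjective (Matrix.mulVecLin M2) ∧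
    Subsingleton ((Fin 10 → ℤ) ⧸ LinearMap.range (Matrix.mulVecLin M2)) := by
  have hs : Function.Surjective (Matrix.mulVecLin M2) := by
    intro y
    refine ⟨N2.mulVec y, ?_⟩
    rw [Matrix.mulVecLin_apply, Matrix.mulVec_mulVec, M2_mul_N2, Matrix.one_mulVec]
  refine ⟨hs, ?_⟩
  have : LinearMap.range (Matrix.mulVecLin M2) = ⊤ := LinearMap.range_eq_top.mpr hs
  rw [this]
  exact Submodule.Quotient.subsingleton_iff.mpr rfl
end
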